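/- Let G be a finite acyclic directed graph with complex edge weights, with distinguished sources s₁,...,s_m and sinks t₁,...,t_m. Assume the graph is planar with sources and sinks on the boundary in the order s₁,...,s_m,t_m,...,t₁ (so that any tuple of vertex-disjoint paths from sources indexed by I = {i₁<...<i_k} to sinks indexed by J = {j₁<...<j_k} must connect s_{i_ℓ} to t_{j_ℓ}). Then det(P[I,J]) = ∑_Π w(Π), where P is the m×m path matrix with P_{i,j} = ∑_{π: s_i → t_j} w(π), and the sum on the right is over all tuples Π of pairwise vertex-disjoint paths from (s_{i₁},...,s_{i_k}) to (t_{j₁},...,t_{j_k}), with w(Π) the product of the weights of all edges used. -/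

import Mathlib

attribute [local instance] Classical.propDecidable

/-- The data of a candidate path in a finite graph on vertex set `V`: a number of edges
`ℓ ≤ card V` together with a sequence of `ℓ + 1` vertices. (In an acyclic graph every
path is vertex-disjoint, hence has at most `card V` vertices, so this bound loses no
paths.) -/
abbrev PathData (V : Type*) [Fintype V] : Type _ :=
  Σ ℓ : Fin (Fintype.card V + 1), (Fin ((ℓ : ℕ) + 1) → V)

/-- `p` is a directed path from `u` to `v` for the adjacency relation `Adj`. -/
def IsPath {V : Type*} [Fintype V] (Adj : V → V → Prop) (p : PathData V) (u v : V) : Prop :=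
  p.2 0 = u ∧ p.2 (Fin.last (p.1 : ℕ)) = v ∧
    ∀ i : Fin (p.1 : ℕ), Adj (p.2 i.castSucc) (p.2 i.succ)

/-- The weight of a path: the product of its edge weights. -/
noncomputable def pathWeight {V : Type*} [Fintype V] (w : V → V → ℂ) (p : PathData V) : ℂ :=
  ∏ i : Fin (p.1 : ℕ), w (p.2 i.castSucc) (p.2 i.succ)

/-- The path matrix of a weighted graph with sources `s 1, …, s m` and sinks
`t 1, …, t m`: its `(i,j)` entry is the sum of the weights of all paths from `s i`
to `t j`. -/
noncomputable def pathMatrix {V : Type*} [Fintype V] (Adj : V → V → Prop) (w : V → V → ℂ)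
    {m : ℕ} (s t : Fin m → V) : Matrix (Fin m) (Fin m) ℂ :=
  fun i j => ∑ p : PathData V, if IsPath Adj p (s i) (t j) then pathWeight w p else 0

/-- A tuple of paths is non-intersecting (pairwise vertex-disjoint). -/
def DisjointPaths {V : Type*} [Fintype V] {kk : ℕ} (P : Fin kk → PathData V) : Prop :=
  ∀ a b : Fin kk, a ≠ b →
    ∀ (x : Fin (((P a).1 : ℕ) + 1)) (y : Fin (((P b).1 : ℕ) + 1)), (P a).2 x ≠ (P b).2 y

namespace LGV

variable {V : Type*} [Fintype V]

set_option linter.unusedSectionVars false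

/-- Clamped extension of the vertex sequence of a path to all of `ℕ`. -/
noncomputable def pfun (p : PathData V) : ℕ → V :=
  fun i => p.2 ⟨min i p.1, Nat.lt_succ_of_le (min_le_right _ _)⟩

lemma pfun_eq (p : PathData V) (n : ℕ) (hn : n ≤ (p.1 : ℕ)) :
    pfun p n = p.2 ⟨n, Nat.lt_succ_of_le hn⟩ := by
  have h : (⟨min n (p.1 : ℕ), Nat.lt_succ_of_le (min_le_right _ _)⟩ : Fin ((p.1 : ℕ) + 1))
      = ⟨n, Nat.lt_succ_of_le hn⟩ := Fin.ext (Nat.min_eq_left hn)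
  unfold pfun
  rw [h]

lemma pfun_fin (p : PathData V) (i : Fin ((p.1 : ℕ) + 1)) : pfun p (i : ℕ) = p.2 i := by
  rw [pfun_eq p i (Nat.lt_succ_iff.mp i.2)]

/-- Adjacency along a `ℕ`-indexed vertex sequence. -/
def Nadj (Adj : V → V → Prop) (L : ℕ) (f : ℕ → V) : Prop :=
  ∀ i, i < L → Adj (f i) (f (i + 1))

lemma isPath_nadj {Adj : V → V → Prop} {p : PathData V} {u v : V}
    (h : IsPath Adj p u v) : Nadj Adj (p.1 : ℕ) (pfun p) := by
  intro i hi
  have h3 := h.2.2 ⟨i, hi⟩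
  rw [pfun_eq p i (le_of_lt hi), pfun_eq p (i+1) hi]
  exact h3

lemma isPath_zero {Adj : V → V → Prop} {p : PathData V} {u v : V}
    (h : IsPath Adj p u v) : pfun p 0 = u := by
  rw [pfun_eq p 0 (Nat.zero_le _)]; exact h.1

lemma isPath_last {Adj : V → V → Prop} {p : PathData V} {u v : V}
    (h : IsPath Adj p u v) : pfun p (p.1 : ℕ) = v := by
  rw [pfun_eq p _ le_rfl]; exact h.2.1

lemma nadj_transGen {Adj : V → V → Prop} {L : ℕ} {f : ℕ → V} (h : Nadj Adj L f) :
    ∀ i j, i < j → j ≤ L → Relation.TransGen Adj (f i) (f j) := by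
  intro i j hij hjL
  induction j with
  | zero => omega
  | succ n ih =>
    rcases Nat.lt_succ_iff_lt_or_eq.mp hij with h' | h'
    · exact (ih h' (by omega)).tail (h n (by omega))
    · subst h'; exact Relation.TransGen.single (h i (by omega))

lemma nadj_ne {Adj : V → V → Prop} (hacyc : ∀ v : V, ¬ Relation.TransGen Adj v v)
    {L : ℕ} {f : ℕ → V} (h : Nadj Adj L f) {i j : ℕ} (hij : i < j) (hjL : j ≤ L) :
    f i ≠ f j := by
  intro he
  exact hacyc (f i) (he ▸ nadj_transGen h i j hij hjL)

lemma nadj_inj {Adj : V → V → Prop} (hacyc : ∀ v : V, ¬ Relation.TransGen Adj v v)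
    {L : ℕ} {f : ℕ → V} (h : Nadj Adj L f) {i j : ℕ} (hi : i ≤ L) (hj : j ≤ L)
    (he : f i = f j) : i = j := by
  rcases lt_trichotomy i j with h' | h' | h'
  · exact absurd he (nadj_ne hacyc h h' hj)
  · exact h'
  · exact absurd he.symm (nadj_ne hacyc h h' hi)

lemma nadj_card {Adj : V → V → Prop} (hacyc : ∀ v : V, ¬ Relation.TransGen Adj v v)
    {L : ℕ} {f : ℕ → V} (h : Nadj Adj L f) : L < Fintype.card V + 1 := by
  have hinj : Function.Injective (fun i : Fin (L + 1) => f (i : ℕ)) := by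
    intro i j he
    exact Fin.ext (nadj_inj hacyc h (Nat.lt_succ_iff.mp i.2) (Nat.lt_succ_iff.mp j.2) he)
  have := Fintype.card_le_of_injective _ hinj
  simp only [Fintype.card_fin] at this
  omega

/-- Weight of a `ℕ`-indexed vertex sequence of length `L`. -/
noncomputable def nweight (w : V → V → ℂ) (L : ℕ) (f : ℕ → V) : ℂ :=
  ∏ i ∈ Finset.range L, w (f i) (f (i + 1))

lemma pathWeight_eq (w : V → V → ℂ) (p : PathData V) :
    pathWeight w p = nweight w (p.1 : ℕ) (pfun p) := by
  unfold pathWeight nweight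
  rw [← Fin.prod_univ_eq_prod_range (fun i => w (pfun p i) (pfun p (i+1))) (p.1 : ℕ)]
  apply Finset.prod_congr rfl
  intro i _
  rw [pfun_eq p i (Nat.lt_succ_iff.mp (Nat.lt_succ_of_lt i.2)), pfun_eq p ((i:ℕ)+1) i.2]
  rfl

/-- Build a `PathData` from a length and a `ℕ`-indexed function. -/
noncomputable def mkP (L : ℕ) (hL : L < Fintype.card V + 1) (f : ℕ → V) : PathData V :=
  ⟨⟨L, hL⟩, fun i => f (i : ℕ)⟩

@[simp] lemma mkP_fst (L : ℕ) (hL : L < Fintype.card V + 1) (f : ℕ → V) :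
    ((mkP L hL f).1 : ℕ) = L := rfl

lemma mkP_pfun (L : ℕ) (hL : L < Fintype.card V + 1) (f : ℕ → V) (n : ℕ) (hn : n ≤ L) :
    pfun (mkP L hL f) n = f n := by
  rw [pfun_eq _ n (by simpa using hn)]; rfl

lemma isPath_mk {Adj : V → V → Prop} {L : ℕ} {hL : L < Fintype.card V + 1} {f : ℕ → V}
    {u v : V} (h0 : f 0 = u) (hl : f L = v) (ha : Nadj Adj L f) :
    IsPath Adj (mkP L hL f) u v := by
  refine ⟨h0, hl, ?_⟩
  intro i
  have := ha (i : ℕ) i.2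
  exact this

lemma path_ext {p q : PathData V} (h1 : (p.1 : ℕ) = (q.1 : ℕ))
    (h2 : ∀ n ≤ (p.1 : ℕ), pfun p n = pfun q n) : p = q := by
  rcases p with ⟨⟨L, hL⟩, fp⟩
  rcases q with ⟨⟨L', hL'⟩, fq⟩
  simp only at h1
  subst h1
  have : hL = hL' := rfl
  subst this
  congr 1
  funext i
  have := h2 (i : ℕ) (Nat.lt_succ_iff.mp i.2)
  rwa [pfun_fin, pfun_fin] at this

end LGV
namespace LGV

variable {V : Type*} [Fintype V]

set_option linter.unusedSectionVars false

/-- Splice two vertex sequences: follow `f` up to position `x`, then follow `g`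
from position `y` onwards. -/
def sfun (f g : ℕ → V) (x y : ℕ) : ℕ → V :=
  fun i => if i ≤ x then f i else g (y + i - x)

lemma sfun_le {f g : ℕ → V} {x y i : ℕ} (h : i ≤ x) : sfun f g x y i = f i := if_pos h

lemma sfun_gt {f g : ℕ → V} {x y i : ℕ} (h : x < i) : sfun f g x y i = g (y + i - x) :=
  if_neg (by omega)

lemma sfun_nadj {Adj : V → V → Prop} {f g : ℕ → V} {Lp Lq x y : ℕ}
    (hf : Nadj Adj Lp f) (hg : Nadj Adj Lq g) (hx : x ≤ Lp) (hy : y ≤ Lq)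
    (hv : f x = g y) : Nadj Adj (x + (Lq - y)) (sfun f g x y) := by
  intro i hi
  rcases lt_trichotomy i x with h | h | h
  · rw [sfun_le (le_of_lt h), sfun_le (by omega : i + 1 ≤ x)]
    exact hf i (by omega)
  · subst h
    rw [sfun_le le_rfl, sfun_gt (by omega : i < i + 1), hv]
    have h2 : y + (i + 1) - i = y + 1 := by omega
    rw [h2]
    exact hg y (by omega)
  · rw [sfun_gt h, sfun_gt (by omega : x < i + 1)]
    have h2 : y + (i + 1) - x = (y + i - x) + 1 := by omega
    rw [h2]
    exact hg (y + i - x) (by omega)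

lemma sfun_zero {f g : ℕ → V} {x y : ℕ} : sfun f g x y 0 = f 0 := sfun_le (Nat.zero_le _)

lemma sfun_last {f g : ℕ → V} {x y Lq : ℕ} (hy : y ≤ Lq) (hv : f x = g y) :
    sfun f g x y (x + (Lq - y)) = g Lq := by
  rcases Nat.eq_or_lt_of_le hy with h | h
  · subst h
    rw [(by omega : x + (y - y) = x), sfun_le le_rfl, hv]
  · rw [sfun_gt (by omega : x < x + (Lq - y))]
    congr 1
    omega

lemma nweight_split (w : V → V → ℂ) {Lq y : ℕ} (g : ℕ → V) (hy : y ≤ Lq) :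
    nweight w Lq g
      = nweight w y g * ∏ i ∈ Finset.range (Lq - y), w (g (y + i)) (g (y + i + 1)) := by
  unfold nweight
  rw [(by omega : Lq = y + (Lq - y)), Finset.prod_range_add]
  simp [Nat.add_sub_cancel]

lemma nweight_sfun (w : V → V → ℂ) {f g : ℕ → V} {Lq x y : ℕ} (hv : f x = g y) :
    nweight w (x + (Lq - y)) (sfun f g x y)
      = nweight w x f * ∏ i ∈ Finset.range (Lq - y), w (g (y + i)) (g (y + i + 1)) := by
  unfold nweight
  rw [Finset.prod_range_add]
  congr 1
  · apply Finset.prod_congr rfl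
    intro i hi
    simp only [Finset.mem_range] at hi
    rw [sfun_le (le_of_lt hi), sfun_le (by omega : i + 1 ≤ x)]
  · apply Finset.prod_congr rfl
    intro i hi
    have h1 : sfun f g x y (x + i) = g (y + i) := by
      rcases Nat.eq_zero_or_pos i with h | h
      · subst h
        rw [Nat.add_zero, Nat.add_zero, sfun_le le_rfl, hv]
      · rw [sfun_gt (by omega : x < x + i)]
        congr 1
        omega
    have h2 : sfun f g x y (x + i + 1) = g (y + i + 1) := by
      rw [sfun_gt (by omega : x < x + i + 1)]
      congr 1
      omega
    rw [h1, h2]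

lemma nweight_sfun_mul (w : V → V → ℂ) {f g : ℕ → V} {Lp Lq x y : ℕ}
    (hx : x ≤ Lp) (hy : y ≤ Lq) (hv : f x = g y) :
    nweight w (x + (Lq - y)) (sfun f g x y) * nweight w (y + (Lp - x)) (sfun g f y x)
      = nweight w Lp f * nweight w Lq g := by
  rw [nweight_sfun w hv, nweight_sfun w hv.symm, nweight_split w f hx,
    nweight_split w g hy]
  ring

end LGV
namespace LGV

variable {V : Type*} [Fintype V] {kk : ℕ}

set_option linter.unusedSectionVars false

/-- `P a` meets some other path of the tuple `P`. -/
def Meets (P : Fin kk → PathData V) (a : Fin kk) : Prop :=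
  ∃ b, a ≠ b ∧ ∃ x y : ℕ, x ≤ ((P a).1 : ℕ) ∧ y ≤ ((P b).1 : ℕ) ∧ pfun (P a) x = pfun (P b) y

lemma exists_meets {P : Fin kk → PathData V} (hnd : ¬ DisjointPaths P) : ∃ a, Meets P a := by
  unfold DisjointPaths at hnd
  push_neg at hnd
  obtain ⟨a, b, hab, x, y, hxy⟩ := hnd
  refine ⟨a, b, hab, x, y, Nat.lt_succ_iff.mp x.2, Nat.lt_succ_iff.mp y.2, ?_⟩
  rw [pfun_fin, pfun_fin]
  exact hxy

lemma not_disjoint_of {P : Fin kk → PathData V} {a b : Fin kk} (hab : a ≠ b) {x y : ℕ}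
    (hx : x ≤ ((P a).1 : ℕ)) (hy : y ≤ ((P b).1 : ℕ))
    (h : pfun (P a) x = pfun (P b) y) : ¬ DisjointPaths P := by
  intro hd
  refine hd a b hab ⟨x, Nat.lt_succ_of_le hx⟩ ⟨y, Nat.lt_succ_of_le hy⟩ ?_
  rw [← pfun_eq _ _ hx, ← pfun_eq _ _ hy]
  exact h

noncomputable def selA (P : Fin kk → PathData V) (hnd : ¬ DisjointPaths P) : Fin kk :=
  (Finset.univ.filter (Meets P)).min' (by
    obtain ⟨a, ha⟩ := exists_meets hnd
    exact ⟨a, Finset.mem_filter.mpr ⟨Finset.mem_univ a, ha⟩⟩)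

lemma selA_meets (P : Fin kk → PathData V) (hnd : ¬ DisjointPaths P) :
    Meets P (selA P hnd) :=
  (Finset.mem_filter.mp (Finset.min'_mem _ _)).2

lemma selA_min (P : Fin kk → PathData V) (hnd : ¬ DisjointPaths P) {c : Fin kk}
    (hc : Meets P c) : selA P hnd ≤ c :=
  Finset.min'_le _ _ (Finset.mem_filter.mpr ⟨Finset.mem_univ c, hc⟩)

lemma selA_eq (P : Fin kk → PathData V) (hnd : ¬ DisjointPaths P) {a : Fin kk}
    (h1 : Meets P a) (h2 : ∀ c, Meets P c → a ≤ c) : selA P hnd = a :=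
  le_antisymm (selA_min P hnd h1)
    (Finset.le_min' _ _ _ fun c hc => h2 c (Finset.mem_filter.mp hc).2)

def PX (P : Fin kk → PathData V) (a : Fin kk) (m : ℕ) : Prop :=
  m ≤ ((P a).1 : ℕ) ∧ ∃ b, a ≠ b ∧ ∃ j, j ≤ ((P b).1 : ℕ) ∧ pfun (P a) m = pfun (P b) j

lemma exists_px {P : Fin kk → PathData V} (hnd : ¬ DisjointPaths P) :
    ∃ m, PX P (selA P hnd) m := by
  obtain ⟨b, hab, x, y, hx, hy, he⟩ := selA_meets P hnd
  exact ⟨x, hx, b, hab, y, hy, he⟩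

noncomputable def selX (P : Fin kk → PathData V) (hnd : ¬ DisjointPaths P) : ℕ :=
  Nat.find (exists_px hnd)

lemma selX_px (P : Fin kk → PathData V) (hnd : ¬ DisjointPaths P) :
    PX P (selA P hnd) (selX P hnd) := Nat.find_spec (exists_px hnd)

lemma selX_min (P : Fin kk → PathData V) (hnd : ¬ DisjointPaths P) {m : ℕ}
    (hm : m < selX P hnd) : ¬ PX P (selA P hnd) m := Nat.find_min (exists_px hnd) hm

lemma selX_eq (P : Fin kk → PathData V) (hnd : ¬ DisjointPaths P) {n : ℕ}
    (h1 : PX P (selA P hnd) n) (h2 : ∀ m < n, ¬ PX P (selA P hnd) m) :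
    selX P hnd = n := (Nat.find_eq_iff _).mpr ⟨h1, h2⟩

noncomputable def selV (P : Fin kk → PathData V) (hnd : ¬ DisjointPaths P) : V :=
  pfun (P (selA P hnd)) (selX P hnd)

def PB (P : Fin kk → PathData V) (a : Fin kk) (v : V) (c : Fin kk) : Prop :=
  a ≠ c ∧ ∃ j, j ≤ ((P c).1 : ℕ) ∧ pfun (P c) j = v

lemma exists_pb {P : Fin kk → PathData V} (hnd : ¬ DisjointPaths P) :
    ∃ c, PB P (selA P hnd) (selV P hnd) c := by
  obtain ⟨h1, b, hab, j, hj, he⟩ := selX_px P hnd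
  exact ⟨b, hab, j, hj, he.symm⟩

noncomputable def selB (P : Fin kk → PathData V) (hnd : ¬ DisjointPaths P) : Fin kk :=
  (Finset.univ.filter (PB P (selA P hnd) (selV P hnd))).min' (by
    obtain ⟨c, hc⟩ := exists_pb hnd
    exact ⟨c, Finset.mem_filter.mpr ⟨Finset.mem_univ c, hc⟩⟩)

lemma selB_pb (P : Fin kk → PathData V) (hnd : ¬ DisjointPaths P) :
    PB P (selA P hnd) (selV P hnd) (selB P hnd) :=
  (Finset.mem_filter.mp (Finset.min'_mem _ _)).2

lemma selB_min (P : Fin kk → PathData V) (hnd : ¬ DisjointPaths P) {c : Fin kk}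
    (hc : PB P (selA P hnd) (selV P hnd) c) : selB P hnd ≤ c :=
  Finset.min'_le _ _ (Finset.mem_filter.mpr ⟨Finset.mem_univ c, hc⟩)

lemma selB_eq (P : Fin kk → PathData V) (hnd : ¬ DisjointPaths P) {b : Fin kk}
    (h1 : PB P (selA P hnd) (selV P hnd) b)
    (h2 : ∀ c, PB P (selA P hnd) (selV P hnd) c → b ≤ c) : selB P hnd = b :=
  le_antisymm (selB_min P hnd h1)
    (Finset.le_min' _ _ _ fun c hc => h2 c (Finset.mem_filter.mp hc).2)

def PY (P : Fin kk → PathData V) (b : Fin kk) (v : V) (m : ℕ) : Prop :=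
  m ≤ ((P b).1 : ℕ) ∧ pfun (P b) m = v

lemma exists_py {P : Fin kk → PathData V} (hnd : ¬ DisjointPaths P) :
    ∃ m, PY P (selB P hnd) (selV P hnd) m := by
  obtain ⟨hab, j, hj, he⟩ := selB_pb P hnd
  exact ⟨j, hj, he⟩

noncomputable def selY (P : Fin kk → PathData V) (hnd : ¬ DisjointPaths P) : ℕ :=
  Nat.find (exists_py hnd)

lemma selY_py (P : Fin kk → PathData V) (hnd : ¬ DisjointPaths P) :
    PY P (selB P hnd) (selV P hnd) (selY P hnd) := Nat.find_spec (exists_py hnd)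

lemma selY_min (P : Fin kk → PathData V) (hnd : ¬ DisjointPaths P) {m : ℕ}
    (hm : m < selY P hnd) : ¬ PY P (selB P hnd) (selV P hnd) m :=
  Nat.find_min (exists_py hnd) hm

lemma selY_eq (P : Fin kk → PathData V) (hnd : ¬ DisjointPaths P) {n : ℕ}
    (h1 : PY P (selB P hnd) (selV P hnd) n)
    (h2 : ∀ m < n, ¬ PY P (selB P hnd) (selV P hnd) m) :
    selY P hnd = n := (Nat.find_eq_iff _).mpr ⟨h1, h2⟩

lemma selA_ne_selB (P : Fin kk → PathData V) (hnd : ¬ DisjointPaths P) :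
    selA P hnd ≠ selB P hnd := (selB_pb P hnd).1

lemma selX_le (P : Fin kk → PathData V) (hnd : ¬ DisjointPaths P) :
    selX P hnd ≤ ((P (selA P hnd)).1 : ℕ) := (selX_px P hnd).1

lemma selY_le (P : Fin kk → PathData V) (hnd : ¬ DisjointPaths P) :
    selY P hnd ≤ ((P (selB P hnd)).1 : ℕ) := (selY_py P hnd).1

lemma selX_v (P : Fin kk → PathData V) (hnd : ¬ DisjointPaths P) :
    pfun (P (selA P hnd)) (selX P hnd) = selV P hnd := rfl

lemma selY_v (P : Fin kk → PathData V) (hnd : ¬ DisjointPaths P) :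
    pfun (P (selB P hnd)) (selY P hnd) = selV P hnd := (selY_py P hnd).2

lemma hv_ab (P : Fin kk → PathData V) (hnd : ¬ DisjointPaths P) :
    pfun (P (selA P hnd)) (selX P hnd) = pfun (P (selB P hnd)) (selY P hnd) := by
  rw [selY_v]; rfl

lemma selA_le_selB (P : Fin kk → PathData V) (hnd : ¬ DisjointPaths P) :
    selA P hnd ≤ selB P hnd := by
  apply selA_min
  exact ⟨selA P hnd, (selA_ne_selB P hnd).symm, selY P hnd, selX P hnd,
    selY_le P hnd, selX_le P hnd, (hv_ab P hnd).symm⟩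

end LGV
namespace LGV

variable {V : Type*} [Fintype V] {kk : ℕ} {Adj : V → V → Prop}

set_option linter.unusedSectionVars false
set_option maxHeartbeats 1000000

/-- The whole tuple consists of combinatorially valid walks. -/
def GoodT (Adj : V → V → Prop) (P : Fin kk → PathData V) : Prop :=
  ∀ c, Nadj Adj ((P c).1 : ℕ) (pfun (P c))

lemma mkP_nadj {L : ℕ} {hL : L < Fintype.card V + 1} {f : ℕ → V} (h : Nadj Adj L f) :
    Nadj Adj (((mkP L hL f).1 : ℕ)) (pfun (mkP L hL f)) := by
  intro i hi
  rw [mkP_fst] at hi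
  rw [mkP_pfun L hL f i (by omega), mkP_pfun L hL f (i + 1) (by omega)]
  exact h i hi

/-- The tail-swap move at the first intersection of a non-disjoint tuple of paths. -/
noncomputable def move (hacyc : ∀ v : V, ¬ Relation.TransGen Adj v v)
    (P : Fin kk → PathData V) (hG : GoodT Adj P) (hnd : ¬ DisjointPaths P) :
    Fin kk → PathData V :=
  Function.update (Function.update P (selA P hnd)
      (mkP (selX P hnd + (((P (selB P hnd)).1 : ℕ) - selY P hnd))
        (nadj_card hacyc (sfun_nadj (hG _) (hG _) (selX_le P hnd) (selY_le P hnd) (hv_ab P hnd)))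
        (sfun (pfun (P (selA P hnd))) (pfun (P (selB P hnd))) (selX P hnd) (selY P hnd))))
    (selB P hnd)
    (mkP (selY P hnd + (((P (selA P hnd)).1 : ℕ) - selX P hnd))
      (nadj_card hacyc (sfun_nadj (hG _) (hG _) (selY_le P hnd) (selX_le P hnd) (hv_ab P hnd).symm))
      (sfun (pfun (P (selB P hnd))) (pfun (P (selA P hnd))) (selY P hnd) (selX P hnd)))

section MoveFacts

variable (hacyc : ∀ v : V, ¬ Relation.TransGen Adj v v)
  (P : Fin kk → PathData V) (hG : GoodT Adj P) (hnd : ¬ DisjointPaths P)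

lemma move_ne {c : Fin kk} (h1 : c ≠ selA P hnd) (h2 : c ≠ selB P hnd) :
    move hacyc P hG hnd c = P c := by
  unfold move
  rw [Function.update_of_ne h2, Function.update_of_ne h1]

lemma move_a :
    move hacyc P hG hnd (selA P hnd)
      = mkP (selX P hnd + (((P (selB P hnd)).1 : ℕ) - selY P hnd))
          (nadj_card hacyc (sfun_nadj (hG _) (hG _) (selX_le P hnd) (selY_le P hnd) (hv_ab P hnd)))
          (sfun (pfun (P (selA P hnd))) (pfun (P (selB P hnd))) (selX P hnd) (selY P hnd)) := by
  unfold move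
  rw [Function.update_of_ne (selA_ne_selB P hnd), Function.update_self]

lemma move_b :
    move hacyc P hG hnd (selB P hnd)
      = mkP (selY P hnd + (((P (selA P hnd)).1 : ℕ) - selX P hnd))
          (nadj_card hacyc (sfun_nadj (hG _) (hG _) (selY_le P hnd) (selX_le P hnd) (hv_ab P hnd).symm))
          (sfun (pfun (P (selB P hnd))) (pfun (P (selA P hnd))) (selY P hnd) (selX P hnd)) := by
  unfold move
  rw [Function.update_self]

lemma move_a_fst :
    ((move hacyc P hG hnd (selA P hnd)).1 : ℕ)
      = selX P hnd + (((P (selB P hnd)).1 : ℕ) - selY P hnd) := by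
  rw [move_a]; rfl

lemma move_b_fst :
    ((move hacyc P hG hnd (selB P hnd)).1 : ℕ)
      = selY P hnd + (((P (selA P hnd)).1 : ℕ) - selX P hnd) := by
  rw [move_b]; rfl

lemma move_a_pfun_le {n : ℕ} (hn : n ≤ selX P hnd) :
    pfun (move hacyc P hG hnd (selA P hnd)) n = pfun (P (selA P hnd)) n := by
  rw [move_a, mkP_pfun _ _ _ n (by omega), sfun_le hn]

lemma move_a_pfun_gt {n : ℕ} (hn : selX P hnd < n)
    (hn2 : n ≤ selX P hnd + (((P (selB P hnd)).1 : ℕ) - selY P hnd)) :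
    pfun (move hacyc P hG hnd (selA P hnd)) n
      = pfun (P (selB P hnd)) (selY P hnd + n - selX P hnd) := by
  rw [move_a, mkP_pfun _ _ _ n hn2, sfun_gt hn]

lemma move_b_pfun_le {n : ℕ} (hn : n ≤ selY P hnd) :
    pfun (move hacyc P hG hnd (selB P hnd)) n = pfun (P (selB P hnd)) n := by
  rw [move_b, mkP_pfun _ _ _ n (by omega), sfun_le hn]

lemma move_b_pfun_gt {n : ℕ} (hn : selY P hnd < n)
    (hn2 : n ≤ selY P hnd + (((P (selA P hnd)).1 : ℕ) - selX P hnd)) :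
    pfun (move hacyc P hG hnd (selB P hnd)) n
      = pfun (P (selA P hnd)) (selX P hnd + n - selY P hnd) := by
  rw [move_b, mkP_pfun _ _ _ n hn2, sfun_gt hn]

lemma move_good : GoodT Adj (move hacyc P hG hnd) := by
  intro c
  by_cases h1 : c = selA P hnd
  · subst h1
    rw [move_a]
    exact mkP_nadj (sfun_nadj (hG _) (hG _) (selX_le P hnd) (selY_le P hnd) (hv_ab P hnd))
  · by_cases h2 : c = selB P hnd
    · subst h2
      rw [move_b]
      exact mkP_nadj (sfun_nadj (hG _) (hG _) (selY_le P hnd) (selX_le P hnd) (hv_ab P hnd).symm)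
    · rw [move_ne hacyc P hG hnd h1 h2]
      exact hG c

lemma move_not_disjoint : ¬ DisjointPaths (move hacyc P hG hnd) := by
  apply not_disjoint_of (selA_ne_selB P hnd) (x := selX P hnd) (y := selY P hnd)
  · rw [move_a_fst]; omega
  · rw [move_b_fst]; omega
  · rw [move_a_pfun_le hacyc P hG hnd le_rfl, move_b_pfun_le hacyc P hG hnd le_rfl]
    exact hv_ab P hnd

lemma move_a_vertex {n : ℕ} (hn : n ≤ ((move hacyc P hG hnd (selA P hnd)).1 : ℕ)) :
    (∃ j ≤ selX P hnd, pfun (move hacyc P hG hnd (selA P hnd)) n = pfun (P (selA P hnd)) j)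
    ∨ (∃ j, selY P hnd < j ∧ j ≤ ((P (selB P hnd)).1 : ℕ) ∧
        pfun (move hacyc P hG hnd (selA P hnd)) n = pfun (P (selB P hnd)) j) := by
  rw [move_a_fst] at hn
  rcases le_or_gt n (selX P hnd) with h | h
  · exact Or.inl ⟨n, h, move_a_pfun_le hacyc P hG hnd h⟩
  · refine Or.inr ⟨selY P hnd + n - selX P hnd, by omega, ?_, ?_⟩
    · have := selY_le P hnd
      omega
    · exact move_a_pfun_gt hacyc P hG hnd h hn

lemma move_b_vertex {n : ℕ} (hn : n ≤ ((move hacyc P hG hnd (selB P hnd)).1 : ℕ)) :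
    (∃ j ≤ selY P hnd, pfun (move hacyc P hG hnd (selB P hnd)) n = pfun (P (selB P hnd)) j)
    ∨ (∃ j, selX P hnd < j ∧ j ≤ ((P (selA P hnd)).1 : ℕ) ∧
        pfun (move hacyc P hG hnd (selB P hnd)) n = pfun (P (selA P hnd)) j) := by
  rw [move_b_fst] at hn
  rcases le_or_gt n (selY P hnd) with h | h
  · exact Or.inl ⟨n, h, move_b_pfun_le hacyc P hG hnd h⟩
  · refine Or.inr ⟨selX P hnd + n - selY P hnd, by omega, ?_, ?_⟩
    · have := selX_le P hnd
      omega
    · exact move_b_pfun_gt hacyc P hG hnd h hn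

lemma move_vertex (d : Fin kk) {n : ℕ} (hn : n ≤ ((move hacyc P hG hnd d).1 : ℕ)) :
    ∃ e, ∃ j ≤ ((P e).1 : ℕ), pfun (move hacyc P hG hnd d) n = pfun (P e) j ∧
      (e = d ∨ e = selA P hnd ∨ e = selB P hnd) := by
  by_cases h1 : d = selA P hnd
  · subst h1
    rcases move_a_vertex hacyc P hG hnd hn with ⟨j, hj, he⟩ | ⟨j, _, hj2, he⟩
    · exact ⟨selA P hnd, j, le_trans hj (selX_le P hnd), he, Or.inr (Or.inl rfl)⟩
    · exact ⟨selB P hnd, j, hj2, he, Or.inr (Or.inr rfl)⟩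
  · by_cases h2 : d = selB P hnd
    · subst h2
      rcases move_b_vertex hacyc P hG hnd hn with ⟨j, hj, he⟩ | ⟨j, _, hj2, he⟩
      · exact ⟨selB P hnd, j, le_trans hj (selY_le P hnd), he, Or.inr (Or.inr rfl)⟩
      · exact ⟨selA P hnd, j, hj2, he, Or.inr (Or.inl rfl)⟩
    · rw [move_ne hacyc P hG hnd h1 h2] at hn ⊢
      exact ⟨d, n, hn, rfl, Or.inl rfl⟩

end MoveFacts

end LGV
namespace LGV

variable {V : Type*} [Fintype V] {kk : ℕ} {Adj : V → V → Prop}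

set_option linter.unusedSectionVars false
set_option maxHeartbeats 1000000

section Stability

variable (hacyc : ∀ v : V, ¬ Relation.TransGen Adj v v)
  (P : Fin kk → PathData V) (hG : GoodT Adj P) (hnd : ¬ DisjointPaths P)

lemma selA_move (hnd' : ¬ DisjointPaths (move hacyc P hG hnd)) :
    selA (move hacyc P hG hnd) hnd' = selA P hnd := by
  apply selA_eq
  · refine ⟨selB P hnd, selA_ne_selB P hnd, selX P hnd, selY P hnd, ?_, ?_, ?_⟩
    · rw [move_a_fst]; omega
    · rw [move_b_fst]; omega
    · rw [move_a_pfun_le hacyc P hG hnd le_rfl, move_b_pfun_le hacyc P hG hnd le_rfl]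
      exact hv_ab P hnd
  · intro c hc
    by_contra hlt
    push_neg at hlt
    have hab := selA_le_selB P hnd
    have hca : c ≠ selA P hnd := ne_of_lt hlt
    have hcb : c ≠ selB P hnd := ne_of_lt (lt_of_lt_of_le hlt hab)
    obtain ⟨d, hcd, x', y', hx', hy', he⟩ := hc
    rw [move_ne hacyc P hG hnd hca hcb] at hx' he
    obtain ⟨e, j, hj, he2, hcase⟩ := move_vertex hacyc P hG hnd d hy'
    rw [he2] at he
    by_cases hce : c = e
    · subst hce
      rcases hcase with h | h | h
      · exact hcd h
      · exact hca h
      · exact hcb h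
    · have hm : Meets P c := ⟨e, hce, x', j, hx', hj, he⟩
      exact absurd (selA_min P hnd hm) (not_le_of_gt hlt)

lemma selX_move (hnd' : ¬ DisjointPaths (move hacyc P hG hnd)) :
    selX (move hacyc P hG hnd) hnd' = selX P hnd := by
  apply selX_eq
  · rw [selA_move hacyc P hG hnd hnd']
    refine ⟨?_, selB P hnd, selA_ne_selB P hnd, selY P hnd, ?_, ?_⟩
    · rw [move_a_fst]; omega
    · rw [move_b_fst]; omega
    · rw [move_a_pfun_le hacyc P hG hnd le_rfl, move_b_pfun_le hacyc P hG hnd le_rfl]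
      exact hv_ab P hnd
  · intro m hm
    rw [selA_move hacyc P hG hnd hnd']
    rintro ⟨hm1, d, had, j, hj, he⟩
    have hmx := selX_le P hnd
    rw [move_a_pfun_le hacyc P hG hnd (le_of_lt hm)] at he
    by_cases h1 : d = selA P hnd
    · exact had h1.symm
    · by_cases h2 : d = selB P hnd
      · subst h2
        rcases move_b_vertex hacyc P hG hnd hj with ⟨j', hj', he'⟩ | ⟨j', hgt, hj', he'⟩
        · have hpx : PX P (selA P hnd) m :=
            ⟨by omega, selB P hnd, selA_ne_selB P hnd, j',
              le_trans hj' (selY_le P hnd), by rw [he, he']⟩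
          exact selX_min P hnd hm hpx
        · have heq : pfun (P (selA P hnd)) m = pfun (P (selA P hnd)) j' := by rw [he, he']
          have := nadj_inj hacyc (hG (selA P hnd)) (by omega) hj' heq
          omega
      · rw [move_ne hacyc P hG hnd h1 h2] at hj he
        have hpx : PX P (selA P hnd) m := ⟨by omega, d, had, j, hj, he⟩
        exact selX_min P hnd hm hpx

lemma selV_move (hnd' : ¬ DisjointPaths (move hacyc P hG hnd)) :
    selV (move hacyc P hG hnd) hnd' = selV P hnd := by
  unfold selV
  rw [selA_move hacyc P hG hnd hnd', selX_move hacyc P hG hnd hnd',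
    move_a_pfun_le hacyc P hG hnd le_rfl]

lemma selB_move (hnd' : ¬ DisjointPaths (move hacyc P hG hnd)) :
    selB (move hacyc P hG hnd) hnd' = selB P hnd := by
  apply selB_eq
  · rw [selA_move hacyc P hG hnd hnd', selV_move hacyc P hG hnd hnd']
    refine ⟨selA_ne_selB P hnd, selY P hnd, ?_, ?_⟩
    · rw [move_b_fst]; omega
    · rw [move_b_pfun_le hacyc P hG hnd le_rfl]
      exact selY_v P hnd
  · intro c hc
    rw [selA_move hacyc P hG hnd hnd', selV_move hacyc P hG hnd hnd'] at hc
    obtain ⟨hac, j, hj, he⟩ := hc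
    by_cases h2 : c = selB P hnd
    · exact le_of_eq h2.symm
    · rw [move_ne hacyc P hG hnd (fun h => hac h.symm) h2] at hj he
      exact selB_min P hnd ⟨hac, j, hj, he⟩

lemma selY_move (hnd' : ¬ DisjointPaths (move hacyc P hG hnd)) :
    selY (move hacyc P hG hnd) hnd' = selY P hnd := by
  apply selY_eq
  · rw [selB_move hacyc P hG hnd hnd', selV_move hacyc P hG hnd hnd']
    refine ⟨?_, ?_⟩
    · rw [move_b_fst]; omega
    · rw [move_b_pfun_le hacyc P hG hnd le_rfl]
      exact selY_v P hnd
  · intro m hm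
    rw [selB_move hacyc P hG hnd hnd', selV_move hacyc P hG hnd hnd']
    rintro ⟨hm1, he⟩
    rw [move_b_pfun_le hacyc P hG hnd (le_of_lt hm)] at he
    have hy := selY_le P hnd
    exact selY_min P hnd hm ⟨by omega, he⟩

lemma move_move (hG' : GoodT Adj (move hacyc P hG hnd))
    (hnd' : ¬ DisjointPaths (move hacyc P hG hnd)) :
    move hacyc (move hacyc P hG hnd) hG' hnd' = P := by
  have e1 := selA_move hacyc P hG hnd hnd'
  have e2 := selX_move hacyc P hG hnd hnd'
  have e3 := selB_move hacyc P hG hnd hnd'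
  have e4 := selY_move hacyc P hG hnd hnd'
  have hxle := selX_le P hnd
  have hyle := selY_le P hnd
  funext c
  by_cases h1 : c = selA P hnd
  · subst h1
    have hlen : ((move hacyc (move hacyc P hG hnd) hG' hnd' (selA P hnd)).1 : ℕ)
        = ((P (selA P hnd)).1 : ℕ) := by
      have t := move_a_fst hacyc (move hacyc P hG hnd) hG' hnd'
      rw [e1, e2, e3, e4, move_b_fst hacyc P hG hnd] at t
      rw [t]; omega
    refine path_ext hlen ?_
    intro n hn
    rw [hlen] at hn
    rcases le_or_gt n (selX P hnd) with h | h
    · have t1 := move_a_pfun_le hacyc (move hacyc P hG hnd) hG' hnd'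
        (n := n) (by rw [e2]; exact h)
      simp only [e1, e2, e3, e4] at t1
      rw [t1]
      exact move_a_pfun_le hacyc P hG hnd h
    · have t1 := move_a_pfun_gt hacyc (move hacyc P hG hnd) hG' hnd'
        (n := n) (by rw [e2]; exact h)
        (by simp only [e1, e2, e3, e4, move_b_fst hacyc P hG hnd]; omega)
      simp only [e1, e2, e3, e4] at t1
      rw [t1]
      have t2 := move_b_pfun_gt hacyc P hG hnd
        (n := selY P hnd + n - selX P hnd) (by omega) (by omega)
      rw [t2]
      congr 1
      omega
  · by_cases h2 : c = selB P hnd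
    · subst h2
      have hlen : ((move hacyc (move hacyc P hG hnd) hG' hnd' (selB P hnd)).1 : ℕ)
          = ((P (selB P hnd)).1 : ℕ) := by
        have t := move_b_fst hacyc (move hacyc P hG hnd) hG' hnd'
        rw [e1, e2, e3, e4, move_a_fst hacyc P hG hnd] at t
        rw [t]; omega
      refine path_ext hlen ?_
      intro n hn
      rw [hlen] at hn
      rcases le_or_gt n (selY P hnd) with h | h
      · have t1 := move_b_pfun_le hacyc (move hacyc P hG hnd) hG' hnd'
          (n := n) (by rw [e4]; exact h)
        simp only [e1, e2, e3, e4] at t1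
        rw [t1]
        exact move_b_pfun_le hacyc P hG hnd h
      · have t1 := move_b_pfun_gt hacyc (move hacyc P hG hnd) hG' hnd'
          (n := n) (by rw [e4]; exact h)
          (by simp only [e1, e2, e3, e4, move_a_fst hacyc P hG hnd]; omega)
        simp only [e1, e2, e3, e4] at t1
        rw [t1]
        have t2 := move_a_pfun_gt hacyc P hG hnd
          (n := selX P hnd + n - selY P hnd) (by omega) (by omega)
        rw [t2]
        congr 1
        omega
    · have hca' : c ≠ selA (move hacyc P hG hnd) hnd' := by rw [e1]; exact h1
      have hcb' : c ≠ selB (move hacyc P hG hnd) hnd' := by rw [e3]; exact h2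
      rw [move_ne hacyc (move hacyc P hG hnd) hG' hnd' hca' hcb',
        move_ne hacyc P hG hnd h1 h2]

lemma move_path_a {u1 v1 u2 v2 : V} (h1 : IsPath Adj (P (selA P hnd)) u1 v1)
    (h2 : IsPath Adj (P (selB P hnd)) u2 v2) :
    IsPath Adj (move hacyc P hG hnd (selA P hnd)) u1 v2 := by
  rw [move_a]
  apply isPath_mk
  · rw [sfun_zero]; exact isPath_zero h1
  · rw [sfun_last (selY_le P hnd) (hv_ab P hnd)]; exact isPath_last h2
  · exact sfun_nadj (hG _) (hG _) (selX_le P hnd) (selY_le P hnd) (hv_ab P hnd)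

lemma move_path_b {u1 v1 u2 v2 : V} (h1 : IsPath Adj (P (selA P hnd)) u1 v1)
    (h2 : IsPath Adj (P (selB P hnd)) u2 v2) :
    IsPath Adj (move hacyc P hG hnd (selB P hnd)) u2 v1 := by
  rw [move_b]
  apply isPath_mk
  · rw [sfun_zero]; exact isPath_zero h2
  · rw [sfun_last (selX_le P hnd) (hv_ab P hnd).symm]; exact isPath_last h1
  · exact sfun_nadj (hG _) (hG _) (selY_le P hnd) (selX_le P hnd) (hv_ab P hnd).symm

lemma pathWeight_mkP (w : V → V → ℂ) {L : ℕ} {hL : L < Fintype.card V + 1} {f : ℕ → V} :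
    pathWeight w (mkP L hL f) = nweight w L f := by
  rw [pathWeight_eq]
  unfold nweight
  apply Finset.prod_congr (by rw [mkP_fst])
  intro i hi
  simp only [Finset.mem_range] at hi
  rw [mkP_pfun _ _ _ i (le_of_lt hi), mkP_pfun _ _ _ (i + 1) hi]

lemma move_weight (w : V → V → ℂ) :
    ∏ c, pathWeight w (move hacyc P hG hnd c) = ∏ c, pathWeight w (P c) := by
  have hab := selA_ne_selB P hnd
  have key : pathWeight w (move hacyc P hG hnd (selA P hnd))
        * pathWeight w (move hacyc P hG hnd (selB P hnd))
      = pathWeight w (P (selA P hnd)) * pathWeight w (P (selB P hnd)) := by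
    rw [move_a, move_b, pathWeight_mkP, pathWeight_mkP,
      pathWeight_eq w (P (selA P hnd)), pathWeight_eq w (P (selB P hnd))]
    exact nweight_sfun_mul w (selX_le P hnd) (selY_le P hnd) (hv_ab P hnd)
  have hmemB : selB P hnd ∈ Finset.univ (α := Fin kk) := Finset.mem_univ _
  have hmemA : selA P hnd ∈ Finset.univ.erase (selB P hnd) :=
    Finset.mem_erase.mpr ⟨hab, Finset.mem_univ _⟩
  rw [← Finset.mul_prod_erase Finset.univ
      (fun c => pathWeight w (move hacyc P hG hnd c)) hmemB,
    ← Finset.mul_prod_erase _ (fun c => pathWeight w (move hacyc P hG hnd c)) hmemA,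
    ← Finset.mul_prod_erase Finset.univ (fun c => pathWeight w (P c)) hmemB,
    ← Finset.mul_prod_erase _ (fun c => pathWeight w (P c)) hmemA]
  have hrest : ∏ c ∈ (Finset.univ.erase (selB P hnd)).erase (selA P hnd),
        pathWeight w (move hacyc P hG hnd c)
      = ∏ c ∈ (Finset.univ.erase (selB P hnd)).erase (selA P hnd), pathWeight w (P c) := by
    apply Finset.prod_congr rfl
    intro c hc
    rw [move_ne hacyc P hG hnd (Finset.ne_of_mem_erase hc)
      (Finset.ne_of_mem_erase (Finset.mem_of_mem_erase hc))]
  rw [hrest]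
  set R := ∏ c ∈ (Finset.univ.erase (selB P hnd)).erase (selA P hnd), pathWeight w (P c)
  calc pathWeight w (move hacyc P hG hnd (selB P hnd))
        * (pathWeight w (move hacyc P hG hnd (selA P hnd)) * R)
      = (pathWeight w (move hacyc P hG hnd (selA P hnd))
          * pathWeight w (move hacyc P hG hnd (selB P hnd))) * R := by ring
    _ = (pathWeight w (P (selA P hnd)) * pathWeight w (P (selB P hnd))) * R := by rw [key]
    _ = pathWeight w (P (selB P hnd)) * (pathWeight w (P (selA P hnd)) * R) := by ring

end Stability

end LGV

/-- Lindström–Gessel–Viennot lemma: let `Adj` be an acyclic adjacency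
relation on a finite vertex set `V`, with complex edge weights `w`, sources `s` and sinks
`t`. Let `I = {i₁ < ⋯ < i_k}` and `J = {j₁ < ⋯ < j_k}` index sources and sinks, and
assume (the consequence of planarity with boundary order `s₁,…,s_m,t_m,…,t₁`) that any
vertex-disjoint tuple of paths from the sources indexed by `I` to the sinks indexed by
`J` connects `s_{i_ℓ}` to `t_{j_ℓ}` (the connecting permutation is the identity). Then
`det(P[I,J]) = ∑_Π w(Π)`, a sum over vertex-disjoint tuples of paths
`Π : (s_{i₁},…,s_{i_k}) → (t_{j₁},…,t_{j_k})`, where `P` is the path matrix. -/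
theorem lindstrom_gessel_viennot {V : Type*} [Fintype V] (Adj : V → V → Prop)
    (hacyc : ∀ v : V, ¬ Relation.TransGen Adj v v)
    (w : V → V → ℂ) (m kk : ℕ) (s t : Fin m → V)
    (I J : Fin kk → Fin m) (hI : StrictMono I) (hJ : StrictMono J)
    (hplanar : ∀ (τ : Equiv.Perm (Fin kk)) (P : Fin kk → PathData V),
      (∀ a, IsPath Adj (P a) (s (I a)) (t (J (τ a)))) → DisjointPaths P → τ = 1) :
    ((pathMatrix Adj w s t).submatrix I J).det =
      ∑ P : Fin kk → PathData V,
        if (∀ a, IsPath Adj (P a) (s (I a)) (t (J a))) ∧ DisjointPaths P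
        then ∏ a, pathWeight w (P a) else 0 := by
  classical
  -- the signed term attached to a permutation/path-tuple pair
  set G : Equiv.Perm (Fin kk) × (Fin kk → PathData V) → ℂ := fun z =>
    ((Equiv.Perm.sign z.1 : ℤ) : ℂ)
      * ∏ a, (if IsPath Adj (z.2 a) (s (I a)) (t (J (z.1 a))) then pathWeight w (z.2 a) else 0)
    with hG
  -- Step 1: expand the determinant as a sum over pairs
  have step1 : ((pathMatrix Adj w s t).submatrix I J).det
      = ∑ z : Equiv.Perm (Fin kk) × (Fin kk → PathData V), G z := by
    rw [← Matrix.det_transpose, Matrix.det_apply', Fintype.sum_prod_type]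
    apply Finset.sum_congr rfl
    intro σ _
    have expand : ∏ i, ((pathMatrix Adj w s t).submatrix I J).transpose (σ i) i
        = ∑ P : Fin kk → PathData V,
            ∏ a, (if IsPath Adj (P a) (s (I a)) (t (J (σ a))) then pathWeight w (P a) else 0) := by
      have : ∀ i : Fin kk, ((pathMatrix Adj w s t).submatrix I J).transpose (σ i) i
          = ∑ p : PathData V,
              (if IsPath Adj p (s (I i)) (t (J (σ i))) then pathWeight w p else 0) := fun i => rfl
      rw [Finset.prod_congr rfl (fun i _ => this i)]
      exact Fintype.prod_sum _
    rw [expand, Finset.mul_sum]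
  rw [step1]
  -- condition: all paths connect the prescribed endpoints
  set C1 : Equiv.Perm (Fin kk) × (Fin kk → PathData V) → Prop := fun z =>
    ∀ a, IsPath Adj (z.2 a) (s (I a)) (t (J (z.1 a))) with hC1def
  -- Step 2: restrict to pairs where all paths are valid
  have step2 : ∑ z : Equiv.Perm (Fin kk) × (Fin kk → PathData V), G z
      = ∑ z ∈ Finset.univ.filter C1, G z := by
    symm
    apply Finset.sum_filter_of_ne
    intro z _ hz
    by_contra hc
    simp only [hC1def, not_forall] at hc
    obtain ⟨a, ha⟩ := hc
    apply hz
    rw [hG]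
    simp only
    have hzero : (∏ b : Fin kk, if IsPath Adj (z.2 b) (s (I b)) (t (J (z.1 b)))
        then pathWeight w (z.2 b) else 0) = 0 :=
      Finset.prod_eq_zero (Finset.mem_univ a) (if_neg ha)
    rw [hzero, mul_zero]
  rw [step2]
  -- Step 3: split according to disjointness
  have step3 : ∑ z ∈ Finset.univ.filter C1, G z
      = ∑ z ∈ Finset.univ.filter (fun z => C1 z ∧ DisjointPaths z.2), G z
        + ∑ z ∈ Finset.univ.filter (fun z => C1 z ∧ ¬ DisjointPaths z.2), G z := by
    rw [← Finset.sum_filter_add_sum_filter_not (Finset.univ.filter C1)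
      (fun z => DisjointPaths z.2), Finset.filter_filter, Finset.filter_filter]
  rw [step3]
  -- Step 4: the non-disjoint part cancels via the tail-swap involution
  have step4 : ∑ z ∈ Finset.univ.filter (fun z => C1 z ∧ ¬ DisjointPaths z.2), G z = 0 := by
    apply Finset.sum_involution
      (g := fun z hz =>
        (z.1 * Equiv.swap (LGV.selA z.2 (Finset.mem_filter.mp hz).2.2)
            (LGV.selB z.2 (Finset.mem_filter.mp hz).2.2),
          LGV.move hacyc z.2
            (fun c => LGV.isPath_nadj ((Finset.mem_filter.mp hz).2.1 c))
            (Finset.mem_filter.mp hz).2.2))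
    case hg₃ =>
      intro z hz _ heq
      have h1 : z.1 * Equiv.swap (LGV.selA z.2 (Finset.mem_filter.mp hz).2.2)
          (LGV.selB z.2 (Finset.mem_filter.mp hz).2.2) = z.1 := congrArg Prod.fst heq
      rw [mul_eq_left, Equiv.swap_eq_one_iff] at h1
      exact LGV.selA_ne_selB _ _ h1
    case g_mem =>
      intro z hz
      obtain ⟨-, hc1, hnd⟩ := Finset.mem_filter.mp hz
      have hGz : LGV.GoodT Adj z.2 := fun c => LGV.isPath_nadj (hc1 c)
      have hC1' : ∀ c, IsPath Adj (LGV.move hacyc z.2 hGz hnd c)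
          (s (I c)) (t (J ((z.1 * Equiv.swap (LGV.selA z.2 hnd) (LGV.selB z.2 hnd)) c))) := by
        intro c
        by_cases h1 : c = LGV.selA z.2 hnd
        · subst h1
          rw [Equiv.Perm.mul_apply, Equiv.swap_apply_left]
          exact LGV.move_path_a hacyc z.2 hGz hnd (hc1 _) (hc1 _)
        · by_cases h2 : c = LGV.selB z.2 hnd
          · subst h2
            rw [Equiv.Perm.mul_apply, Equiv.swap_apply_right]
            exact LGV.move_path_b hacyc z.2 hGz hnd (hc1 _) (hc1 _)
          · rw [Equiv.Perm.mul_apply, Equiv.swap_apply_of_ne_of_ne h1 h2,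
              LGV.move_ne hacyc z.2 hGz hnd h1 h2]
            exact hc1 c
      have main : (z.1 * Equiv.swap (LGV.selA z.2 hnd) (LGV.selB z.2 hnd),
          LGV.move hacyc z.2 hGz hnd)
          ∈ Finset.univ.filter (fun z => C1 z ∧ ¬ DisjointPaths z.2) :=
        Finset.mem_filter.mpr ⟨Finset.mem_univ _, hC1',
          LGV.move_not_disjoint hacyc z.2 hGz hnd⟩
      exact main
    case hg₁ =>
      intro z hz
      obtain ⟨-, hc1, hnd⟩ := Finset.mem_filter.mp hz
      have hGz : LGV.GoodT Adj z.2 := fun c => LGV.isPath_nadj (hc1 c)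
      have hab : LGV.selA z.2 hnd ≠ LGV.selB z.2 hnd := LGV.selA_ne_selB z.2 hnd
      have hC1' : ∀ c, IsPath Adj (LGV.move hacyc z.2 hGz hnd c)
          (s (I c)) (t (J ((z.1 * Equiv.swap (LGV.selA z.2 hnd) (LGV.selB z.2 hnd)) c))) := by
        intro c
        by_cases h1 : c = LGV.selA z.2 hnd
        · subst h1
          rw [Equiv.Perm.mul_apply, Equiv.swap_apply_left]
          exact LGV.move_path_a hacyc z.2 hGz hnd (hc1 _) (hc1 _)
        · by_cases h2 : c = LGV.selB z.2 hnd
          · subst h2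
            rw [Equiv.Perm.mul_apply, Equiv.swap_apply_right]
            exact LGV.move_path_b hacyc z.2 hGz hnd (hc1 _) (hc1 _)
          · rw [Equiv.Perm.mul_apply, Equiv.swap_apply_of_ne_of_ne h1 h2,
              LGV.move_ne hacyc z.2 hGz hnd h1 h2]
            exact hc1 c
      have e1 : G z = ((Equiv.Perm.sign z.1 : ℤ) : ℂ) * ∏ c, pathWeight w (z.2 c) := by
        rw [hG]
        simp only
        congr 1
        exact Finset.prod_congr rfl (fun c _ => if_pos (hc1 c))
      have e2 : G (z.1 * Equiv.swap (LGV.selA z.2 hnd) (LGV.selB z.2 hnd),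
            LGV.move hacyc z.2 hGz hnd)
          = -(((Equiv.Perm.sign z.1 : ℤ) : ℂ) * ∏ c, pathWeight w (z.2 c)) := by
        rw [hG]
        simp only
        rw [Finset.prod_congr rfl (fun c _ => if_pos (hC1' c)),
          LGV.move_weight hacyc z.2 hGz hnd w,
          Equiv.Perm.sign_mul, Equiv.Perm.sign_swap hab]
        push_cast
        ring
      have main : G z + G (z.1 * Equiv.swap (LGV.selA z.2 hnd) (LGV.selB z.2 hnd),
          LGV.move hacyc z.2 hGz hnd) = 0 := by
        rw [e1, e2]; ring
      exact main
    case hg₄ =>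
      intro z hz
      obtain ⟨-, hc1, hnd⟩ := Finset.mem_filter.mp hz
      have hGz : LGV.GoodT Adj z.2 := fun c => LGV.isPath_nadj (hc1 c)
      have hG' : LGV.GoodT Adj (LGV.move hacyc z.2 hGz hnd) :=
        LGV.move_good hacyc z.2 hGz hnd
      have hnd' : ¬ DisjointPaths (LGV.move hacyc z.2 hGz hnd) :=
        LGV.move_not_disjoint hacyc z.2 hGz hnd
      have main : ((z.1 * Equiv.swap (LGV.selA z.2 hnd) (LGV.selB z.2 hnd))
            * Equiv.swap (LGV.selA (LGV.move hacyc z.2 hGz hnd) hnd')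
                (LGV.selB (LGV.move hacyc z.2 hGz hnd) hnd'),
          LGV.move hacyc (LGV.move hacyc z.2 hGz hnd) hG' hnd') = z := by
        refine Prod.ext ?_ ?_
        · show (z.1 * Equiv.swap (LGV.selA z.2 hnd) (LGV.selB z.2 hnd))
              * Equiv.swap (LGV.selA (LGV.move hacyc z.2 hGz hnd) hnd')
                (LGV.selB (LGV.move hacyc z.2 hGz hnd) hnd') = z.1
          rw [LGV.selA_move hacyc z.2 hGz hnd hnd', LGV.selB_move hacyc z.2 hGz hnd hnd',
            mul_assoc, Equiv.swap_mul_self, mul_one]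
        · show LGV.move hacyc (LGV.move hacyc z.2 hGz hnd) hG' hnd' = z.2
          exact LGV.move_move hacyc z.2 hGz hnd hG' hnd'
      exact main
  rw [step4, add_zero]
  -- Step 5: identify the disjoint part with the right-hand side
  have step5 : ∑ z ∈ Finset.univ.filter (fun z => C1 z ∧ DisjointPaths z.2), G z
      = ∑ P ∈ Finset.univ.filter (fun P : Fin kk → PathData V =>
          (∀ a, IsPath Adj (P a) (s (I a)) (t (J a))) ∧ DisjointPaths P),
          ∏ a, pathWeight w (P a) := by
    refine Finset.sum_nbij' (fun z => z.2) (fun P => (1, P)) ?_ ?_ ?_ ?_ ?_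
    · intro z hzm
      obtain ⟨-, hc1, hd⟩ := Finset.mem_filter.mp hzm
      have h1 : z.1 = 1 := hplanar z.1 z.2 hc1 hd
      refine Finset.mem_filter.mpr ⟨Finset.mem_univ _, ?_, hd⟩
      intro a
      have := hc1 a
      rwa [h1, Equiv.Perm.one_apply] at this
    · intro P hPm
      obtain ⟨-, hc1, hd⟩ := Finset.mem_filter.mp hPm
      refine Finset.mem_filter.mpr ⟨Finset.mem_univ _, ?_, hd⟩
      intro a
      simpa using hc1 a
    · intro z hzm
      obtain ⟨-, hc1, hd⟩ := Finset.mem_filter.mp hzm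
      have h1 : z.1 = 1 := hplanar z.1 z.2 hc1 hd
      exact Prod.ext h1.symm rfl
    · intro P _
      rfl
    · intro z hzm
      obtain ⟨-, hc1, hd⟩ := Finset.mem_filter.mp hzm
      have h1 : z.1 = 1 := hplanar z.1 z.2 hc1 hd
      rw [hG]
      simp only
      rw [Finset.prod_congr rfl (fun c _ => if_pos (hc1 c)), h1]
      simp
  rw [step5, Finset.sum_filter]
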